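/- arXiv:math/0110029 — 2 statements merged into one kernel-verified Lean document; each statement's English description precedes it below -/
import Mathlib

section
/- For every Schwartz function η : ℝ → ℝ, the Shannon kernels form a delta sequence as the grid spacing tends to zero: lim_{Δ → 0⁺} ∫_{-∞}^{∞} (sin(πx/Δ)/(πx)) · η(x) dx = η(0). -/
open Real MeasureTheory Filter Topology
open FourierTransform Complex

/-- Complexification of a real-valued Schwartz function. -/
noncomputable def schwartzComplexify (η : SchwartzMap ℝ ℝ) : SchwartzMap ℝ ℂ where
  toFun x := (η x : ℂ)
  smooth' := Complex.ofRealCLM.contDiff.comp η.smooth'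
  decay' := by
    intro k n
    obtain ⟨C, hC⟩ := η.decay' k n
    refine ⟨C, fun x => ?_⟩
    have h : (fun x => ((η x : ℝ) : ℂ)) = Complex.ofRealLI ∘ η := rfl
    rw [h, Complex.ofRealLI.norm_iteratedFDeriv_comp_left (η.smooth ⊤).contDiffAt (mod_cast le_top)]
    exact hC x

lemma schwartzComplexify_apply (η : SchwartzMap ℝ ℝ) (x : ℝ) :
    schwartzComplexify η x = (η x : ℂ) := rfl

/-- Fourier transform of the indicator of `Ioc (-R) R`. -/
lemma fourier_indicator (R x : ℝ) (hR : 0 < R) (hx : x ≠ 0) :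
    𝓕 (Set.indicator (Set.Ioc (-R) R) (fun _ => (1 : ℂ))) x
      = ((Real.sin (2 * π * R * x) / (π * x) : ℝ) : ℂ) := by
  rw [Real.fourier_real_eq_integral_exp_smul]
  have h1 : ∀ v : ℝ, Complex.exp (↑(-2 * π * v * x) * Complex.I) •
      (Set.indicator (Set.Ioc (-R) R) (fun _ => (1 : ℂ)) v)
      = Set.indicator (Set.Ioc (-R) R)
          (fun v => Complex.exp ((↑(-2 * π * x) * Complex.I) * v)) v := by
    intro v
    by_cases hv : v ∈ Set.Ioc (-R) R <;>
      simp [hv, smul_eq_mul] <;> push_cast <;> ring_nf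
  simp_rw [h1]
  rw [integral_indicator measurableSet_Ioc,
    ← intervalIntegral.integral_of_le (by linarith : -R ≤ R),
    integral_exp_mul_complex (by
      simp only [ne_eq, mul_eq_zero, Complex.I_ne_zero, or_false, not_or]
      push_cast
      simp [Real.pi_ne_zero, hx])]
  rw [Complex.ofReal_div, Complex.ofReal_sin, Complex.sin]
  have hπ : (π : ℂ) ≠ 0 := by exact_mod_cast Real.pi_ne_zero
  have hxc : (x : ℂ) ≠ 0 := by exact_mod_cast hx
  have hI : Complex.I ≠ 0 := Complex.I_ne_zero
  push_cast
  field_simp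
  ring_nf
  simp [Complex.I_sq]

lemma innerl_flip : (innerₗ ℝ).flip = innerₗ ℝ := by
  apply LinearMap.ext; intro v; apply LinearMap.ext; intro w
  simpa using real_inner_comm v w

lemma key_identity (η : SchwartzMap ℝ ℝ) {Δ : ℝ} (hΔ : 0 < Δ) :
    ((∫ x : ℝ, (Real.sin (π * x / Δ) / (π * x)) * η x : ℝ) : ℂ)
      = ∫ ξ in (-(2 * Δ)⁻¹)..((2 * Δ)⁻¹), 𝓕 (fun x => (η x : ℂ)) ξ := by
  set R : ℝ := (2 * Δ)⁻¹ with hR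
  have hRpos : 0 < R := by positivity
  have hind : Integrable (Set.indicator (Set.Ioc (-R) R) (fun _ => (1 : ℂ))) := by
    rw [integrable_indicator_iff measurableSet_Ioc]
    exact integrableOn_const measure_Ioc_lt_top.ne
  have hηc : Integrable (fun x => (η x : ℂ)) := (schwartzComplexify η).integrable
  have mul_formula := VectorFourier.integral_fourierIntegral_smul_eq_flip
    (L := innerₗ ℝ) Real.continuous_fourierChar continuous_inner hind hηc
  have hconv : ∀ (f : ℝ → ℂ) (w : ℝ),
      VectorFourier.fourierIntegral 𝐞 volume (innerₗ ℝ) f w = 𝓕 f w := fun _ _ => rfl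
  rw [innerl_flip] at mul_formula
  simp only [hconv] at mul_formula
  have step1 : ((∫ x : ℝ, (Real.sin (π * x / Δ) / (π * x)) * η x : ℝ) : ℂ)
      = ∫ x : ℝ, 𝓕 (Set.indicator (Set.Ioc (-R) R) (fun _ => (1 : ℂ))) x • ((η x : ℂ)) := by
    rw [show ((∫ x : ℝ, (Real.sin (π * x / Δ) / (π * x)) * η x : ℝ) : ℂ)
        = ∫ x : ℝ, ((Real.sin (π * x / Δ) / (π * x) * η x : ℝ) : ℂ) from
      (integral_ofReal (𝕜 := ℂ)).symm]
    apply integral_congr_ae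
    filter_upwards [compl_mem_ae_iff.2 (volume_singleton (a := (0:ℝ)))] with x hx
    have hx0 : x ≠ 0 := hx
    rw [fourier_indicator R x hRpos hx0, smul_eq_mul]
    have : 2 * π * R * x = π * x / Δ := by
      rw [hR]; field_simp
    rw [this]
    push_cast
    ring
  rw [step1, mul_formula]
  have step2 : (∫ x : ℝ, (Set.indicator (Set.Ioc (-R) R) (fun _ => (1 : ℂ)) x)
        • 𝓕 (fun x => (η x : ℂ)) x)
      = ∫ ξ in Set.Ioc (-R) R, 𝓕 (fun x => (η x : ℂ)) ξ := by
    rw [← integral_indicator measurableSet_Ioc]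
    apply integral_congr_ae
    filter_upwards with x
    by_cases hx : x ∈ Set.Ioc (-R) R <;> simp [hx]
  rw [step2, intervalIntegral.integral_of_le (by linarith : -R ≤ R)]

/-- Shannon's delta kernels `x ↦ sin(πx/Δ)/(πx)` form a delta sequence as the
grid spacing `Δ` tends to zero: tested against any Schwartz function `η`,
the integral converges to `η 0`. -/
theorem shannon_kernel_delta_sequence (η : SchwartzMap ℝ ℝ) :
    Tendsto (fun Δ : ℝ => ∫ x : ℝ, (Real.sin (π * x / Δ) / (π * x)) * η x)
      (𝓝[>] (0 : ℝ)) (𝓝 (η 0)) := by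
  have hgi : Integrable (fun x : ℝ => (η x : ℂ)) := (schwartzComplexify η).integrable
  have h𝓕 : Integrable (𝓕 (fun x : ℝ => (η x : ℂ))) := by
    have := (SchwartzMap.fourierTransformCLM ℂ (schwartzComplexify η)).integrable (μ := volume)
    exact this
  have hcont : Continuous (fun x : ℝ => (η x : ℂ)) :=
    Complex.continuous_ofReal.comp η.continuous
  have hinv : ∫ ξ : ℝ, 𝓕 (fun x : ℝ => (η x : ℂ)) ξ = (η 0 : ℂ) := by
    have h0 : 𝓕⁻ (𝓕 (fun x : ℝ => (η x : ℂ))) 0 = ((η 0 : ℝ) : ℂ) :=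
      hgi.fourierInv_fourier_eq h𝓕 hcont.continuousAt
    rw [← h0, Real.fourierInv_eq]
    simp
  have htop : Tendsto (fun Δ : ℝ => (2 * Δ)⁻¹) (𝓝[>] (0 : ℝ)) atTop := by
    apply tendsto_inv_nhdsGT_zero.comp
    refine tendsto_nhdsWithin_of_tendsto_nhds_of_eventually_within _ ?_ ?_
    · simpa [Pi.mul_def] using ((continuous_const.mul continuous_id).tendsto (0 : ℝ)).mono_left
        nhdsWithin_le_nhds
    · filter_upwards [self_mem_nhdsWithin] with Δ hΔ
      exact mul_pos two_pos (Set.mem_Ioi.mp hΔ)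
  have hbot : Tendsto (fun Δ : ℝ => -(2 * Δ)⁻¹) (𝓝[>] (0 : ℝ)) atBot :=
    tendsto_neg_atTop_atBot.comp htop
  have hC : Tendsto (fun Δ : ℝ => ∫ ξ in (-(2 * Δ)⁻¹)..((2 * Δ)⁻¹),
      𝓕 (fun x : ℝ => (η x : ℂ)) ξ) (𝓝[>] (0 : ℝ)) (𝓝 ((η 0 : ℝ) : ℂ)) := by
    rw [← hinv]
    exact intervalIntegral_tendsto_integral h𝓕 hbot htop
  have hC' : Tendsto (fun Δ : ℝ => ((∫ x : ℝ, (Real.sin (π * x / Δ) / (π * x)) * η x : ℝ) : ℂ))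
      (𝓝[>] (0 : ℝ)) (𝓝 ((η 0 : ℝ) : ℂ)) := by
    apply hC.congr'
    filter_upwards [self_mem_nhdsWithin] with Δ hΔ
    exact (key_identity η hΔ).symm
  have := (Complex.continuous_re.tendsto _).comp hC'
  simpa [Function.comp_def] using this
end

section
/- For fixed window width σ > 0, the (unnormalized) regularized Shannon kernels form a delta sequence as the grid spacing tends to zero: for every Schwartz function η : ℝ → ℝ, lim_{Δ → 0⁺} ∫_{-∞}^{∞} (sin(πx/Δ)/(πx)) · exp(−x²/(2σ²)) · η(x) dx = η(0). -/
open Real MeasureTheory Filter Topology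
open Complex
open scoped FourierTransform

/-- Riemann–Lebesgue for the sine transform. -/
lemma sin_riemann_lebesgue {h : ℝ → ℝ} (hh : Integrable h) :
    Tendsto (fun t : ℝ => ∫ x : ℝ, Real.sin (t * x) * h x) atTop (𝓝 0) := by
  have H := Real.zero_at_infty_fourier (fun x : ℝ => (h x : ℂ))
  have hmap : Tendsto (fun t : ℝ => -t / (2 * π)) atTop (cocompact ℝ) := by
    rw [cocompact_eq_atBot_atTop]
    refine Tendsto.mono_right ?_ le_sup_left
    exact (tendsto_neg_atTop_atBot).atBot_div_const (by positivity)
  have H2 := (Complex.continuous_im.tendsto 0).comp (H.comp hmap)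
  simp only [Complex.zero_im] at H2
  refine H2.congr fun t => ?_
  have hint : Integrable (fun v : ℝ => Complex.exp (↑(t * v) * I) * (h v : ℂ)) := by
    refine hh.ofReal.bdd_mul (c := 1) ?_ (Eventually.of_forall fun v => le_of_eq (Complex.norm_exp_ofReal_mul_I _))
    exact (Complex.continuous_exp.comp ((continuous_ofReal.comp
      (continuous_const.mul continuous_id)).mul continuous_const)).aestronglyMeasurable
  have key : 𝓕 (fun x : ℝ => (h x : ℂ)) (-t / (2 * π)) =
      ∫ v : ℝ, Complex.exp (↑(t * v) * I) * (h v : ℂ) := by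
    rw [Real.fourier_real_eq_integral_exp_smul]
    congr 1
    funext v
    rw [smul_eq_mul]
    have : -2 * π * v * (-t / (2 * π)) = t * v := by
      field_simp
    rw [this]
  simp only [Function.comp_apply, key]
  have him := integral_im (𝕜 := ℂ) hint
  simp only [RCLike.im_to_complex] at him
  rw [← him]
  congr 1
  funext v
  simp [Complex.mul_im, Complex.exp_ofReal_mul_I_im, Complex.exp_ofReal_mul_I_re,
    Complex.ofReal_re, Complex.ofReal_im, ← Complex.ofReal_mul]

lemma gaussian_sinc_tendsto (σ : ℝ) (hσ : 0 < σ) :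
    Tendsto (fun t : ℝ =>
        ∫ x : ℝ, Real.sin (t * x) / (π * x) * Real.exp (-(x ^ 2) / (2 * σ ^ 2)))
      atTop (𝓝 1) := by
  set b₀ : ℝ := (2 * σ ^ 2)⁻¹ with hb₀def
  have hb₀ : 0 < b₀ := by positivity
  set b : ℂ := (b₀ : ℂ) with hbdef
  have hb : 0 < b.re := by simpa [hbdef] using hb₀
  set g : ℝ → ℝ := fun s => Real.sqrt (π / b₀) * Real.exp (-(4 * b₀)⁻¹ * s ^ 2) with hgdef
  have hgInt : Integrable g :=
    (integrable_exp_neg_mul_sq (by positivity : (0:ℝ) < (4 * b₀)⁻¹)).const_mul _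
  have hgval : ∫ s : ℝ, g s = 2 * π := by
    rw [hgdef, MeasureTheory.integral_const_mul, integral_gaussian, ← Real.sqrt_mul (by positivity)]
    have : π / b₀ * (π / (4 * b₀)⁻¹) = (2 * π) ^ 2 := by
      field_simp
      ring
    rw [this, Real.sqrt_sq (by positivity)]
  -- the Fourier transform of the Gaussian, as a real function
  have hGh : ∀ s : ℝ, (↑π / b) ^ (1 / 2 : ℂ) * Complex.exp (-(s : ℂ) ^ 2 / (4 * b)) =
      ((g s : ℝ) : ℂ) := by
    intro s
    have h1 : (↑π / b) = ((π / b₀ : ℝ) : ℂ) := by push_cast [hbdef]; ring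
    have h2 : (-(s : ℂ) ^ 2 / (4 * b)) = ((-(4 * b₀)⁻¹ * s ^ 2 : ℝ) : ℂ) := by
      push_cast [hbdef]
      field_simp
    rw [h1, h2, ← Complex.ofReal_exp, hgdef]
    rw [show (1 / 2 : ℂ) = ((1 / 2 : ℝ) : ℂ) by norm_num]
    rw [← Complex.ofReal_cpow (by positivity), ← Real.rpow_natCast]
    push_cast
    rw [← Real.sqrt_eq_rpow]
    norm_num
  have hlim : Tendsto (fun t : ℝ => (2 * π)⁻¹ * ∫ s in (-t)..t, g s) atTop (𝓝 1) := by
    have h1 := (intervalIntegral_tendsto_integral hgInt tendsto_neg_atTop_atBot tendsto_id).const_mul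
      ((2 * π)⁻¹)
    rw [hgval, inv_mul_cancel₀ (by positivity)] at h1
    exact h1
  refine Tendsto.congr' ?_ hlim
  filter_upwards [eventually_ge_atTop (0 : ℝ)] with t ht
  have hle : (-t : ℝ) ≤ t := by linarith
  -- the key computation, for fixed t ≥ 0
  have key : ∀ x : ℝ, x ≠ 0 →
      ∫ s in Set.Ioc (-t) t, Complex.exp (I * ↑s * ↑x) = 2 * ↑(Real.sin (t * x)) / ↑x := by
    intro x hx
    have hx' : (x : ℂ) ≠ 0 := Complex.ofReal_ne_zero.mpr hx
    have hc : (I * ↑x : ℂ) ≠ 0 := mul_ne_zero Complex.I_ne_zero hx'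
    rw [← intervalIntegral.integral_of_le hle]
    have : ∀ s : ℝ, Complex.exp (I * ↑s * ↑x) = Complex.exp ((I * ↑x) * ↑s) := by
      intro s; ring_nf
    simp_rw [this]
    rw [integral_exp_mul_complex hc]
    have e1 : I * (x:ℂ) * (t:ℂ) = ((t * x : ℝ) : ℂ) * I := by push_cast; ring
    have e2 : I * (x:ℂ) * ((-t : ℝ):ℂ) = -((t * x : ℝ) : ℂ) * I := by push_cast; ring
    rw [e1, e2, Complex.exp_mul_I, Complex.exp_mul_I]
    have : Complex.cos ↑(t * x) + Complex.sin ↑(t * x) * I -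
        (Complex.cos (-↑(t * x)) + Complex.sin (-↑(t * x)) * I)
        = 2 * Complex.sin ↑(t * x) * I := by
      rw [Complex.cos_neg, Complex.sin_neg]; ring
    rw [this, Complex.ofReal_sin, div_eq_div_iff hc hx']
    ring
  -- Fubini integrability
  have hFint : Integrable (Function.uncurry fun (x : ℝ) (s : ℝ) =>
      Complex.exp (I * ↑s * ↑x) * Complex.exp (-b * ↑x ^ 2))
      (volume.prod (volume.restrict (Set.Ioc (-t) t))) := by
    have hbound : Integrable (fun p : ℝ × ℝ => Real.exp (-b₀ * p.1 ^ 2) * 1)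
        (volume.prod (volume.restrict (Set.Ioc (-t) t))) :=
      (integrable_exp_neg_mul_sq hb₀).mul_prod
        ((integrableOn_const_iff (C := (1:ℝ))).mpr (Or.inr measure_Ioc_lt_top))
    refine hbound.mono' ?_ ?_
    · exact (Complex.continuous_exp.comp (by fun_prop)).mul
        (Complex.continuous_exp.comp (by fun_prop)) |>.aestronglyMeasurable
    · filter_upwards with p
      rw [Function.uncurry]
      simp only [norm_mul, Complex.norm_exp]
      have h1 : (I * ↑p.2 * ↑p.1 : ℂ).re = 0 := by simp
      have h2 : (-b * ↑p.1 ^ 2 : ℂ).re = -b₀ * p.1 ^ 2 := by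
        rw [hbdef, show -(b₀:ℂ) * (p.1:ℂ) ^ 2 = ((-b₀ * p.1 ^ 2 : ℝ) : ℂ) by push_cast; ring,
          Complex.ofReal_re]
      rw [h1, h2, Real.exp_zero, one_mul, mul_one]
  -- the main identity for fixed t
  symm
  have main : ((∫ x : ℝ, Real.sin (t * x) / (π * x) * Real.exp (-(x ^ 2) / (2 * σ ^ 2)) : ℝ) : ℂ)
      = (((2 * π)⁻¹ * ∫ s in (-t)..t, g s : ℝ) : ℂ) := by
    rw [show ((∫ x : ℝ, Real.sin (t * x) / (π * x) * Real.exp (-(x ^ 2) / (2 * σ ^ 2)) : ℝ) : ℂ)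
        = ∫ x : ℝ, ((Real.sin (t * x) / (π * x) * Real.exp (-(x ^ 2) / (2 * σ ^ 2)) : ℝ) : ℂ)
      from integral_ofReal.symm]
    have step1 : ∫ x : ℝ, ((Real.sin (t * x) / (π * x) * Real.exp (-(x ^ 2) / (2 * σ ^ 2)) : ℝ) : ℂ)
        = ∫ x : ℝ, ((2 * π : ℂ))⁻¹ * ((∫ s in Set.Ioc (-t) t, Complex.exp (I * ↑s * ↑x))
            * Complex.exp (-b * ↑x ^ 2)) := by
      refine integral_congr_ae ?_
      filter_upwards [compl_mem_ae_iff.mpr (volume_singleton (a := (0:ℝ)))] with x hx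
      have hx0 : x ≠ 0 := hx
      rw [key x hx0]
      have hexp : Complex.exp (-b * ↑x ^ 2) = ((Real.exp (-(x ^ 2) / (2 * σ ^ 2)) : ℝ) : ℂ) := by
        rw [Complex.ofReal_exp]
        congr 1
        rw [hbdef, hb₀def]
        have hσ' : (σ : ℂ) ≠ 0 := Complex.ofReal_ne_zero.mpr hσ.ne'
        push_cast
        field_simp
      rw [hexp]
      have hx' : (x : ℂ) ≠ 0 := Complex.ofReal_ne_zero.mpr hx0
      have hπ : (π : ℂ) ≠ 0 := Complex.ofReal_ne_zero.mpr pi_ne_zero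
      push_cast
      field_simp
    rw [step1, MeasureTheory.integral_const_mul]
    have step2 : ∫ x : ℝ, ((∫ s in Set.Ioc (-t) t, Complex.exp (I * ↑s * ↑x))
        * Complex.exp (-b * ↑x ^ 2)) = ∫ x : ℝ, ∫ s in Set.Ioc (-t) t,
          Complex.exp (I * ↑s * ↑x) * Complex.exp (-b * ↑x ^ 2) := by
      congr 1
      funext x
      rw [← integral_mul_const]
    rw [step2, MeasureTheory.integral_integral_swap hFint]
    have step3 : ∫ s in Set.Ioc (-t) t, (∫ x : ℝ, Complex.exp (I * ↑s * ↑x)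
        * Complex.exp (-b * ↑x ^ 2)) = ∫ s in Set.Ioc (-t) t, ((g s : ℝ) : ℂ) := by
      refine setIntegral_congr_fun measurableSet_Ioc ?_
      intro s _
      dsimp only
      rw [fourierIntegral_gaussian hb (s : ℂ), hGh s]
    have hor : ∫ s in Set.Ioc (-t) t, ((g s : ℝ) : ℂ) = ((∫ s in Set.Ioc (-t) t, g s : ℝ) : ℂ) :=
      integral_ofReal
    rw [step3, hor, ← intervalIntegral.integral_of_le hle]
    push_cast
    ring
  exact_mod_cast main

example {f : ℝ → ℝ} : ∫ x : ℝ, ((f x : ℝ) : ℂ) = ((∫ x : ℝ, f x : ℝ) : ℂ) := integral_ofReal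

noncomputable def Gfun (σ : ℝ) : ℝ → ℝ := fun x => Real.exp (-(x ^ 2) / (2 * σ ^ 2))

noncomputable def hfun (σ : ℝ) (η : SchwartzMap ℝ ℝ) : ℝ → ℝ :=
  fun x => Gfun σ x * (η x - η 0) / (π * x)

lemma Gfun_integrable (σ : ℝ) (hσ : 0 < σ) : Integrable (Gfun σ) volume := by
  have h : (0:ℝ) < (2 * σ ^ 2)⁻¹ := by positivity
  have heq : Gfun σ = fun x : ℝ => Real.exp (-(2 * σ ^ 2)⁻¹ * x ^ 2) := by
    funext x
    unfold Gfun
    congr 1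
    ring
  rw [heq]
  exact integrable_exp_neg_mul_sq h

lemma Gfun_nonneg (σ : ℝ) (x : ℝ) : 0 ≤ Gfun σ x := Real.exp_nonneg _

lemma hfun_integrable (σ : ℝ) (hσ : 0 < σ) (η : SchwartzMap ℝ ℝ) :
    Integrable (hfun σ η) volume := by
  obtain ⟨C, hCpos, hC⟩ := (SchwartzMap.derivCLM ℝ ℝ η).decay 0 0
  have hC' : ∀ x : ℝ, ‖deriv (η : ℝ → ℝ) x‖ ≤ C := by
    intro x
    have := hC x
    simpa [SchwartzMap.derivCLM_apply] using this
  have hC0 : 0 ≤ C := le_trans (norm_nonneg _) (hC' 0)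
  have hLip : LipschitzWith C.toNNReal (η : ℝ → ℝ) := by
    refine lipschitzWith_of_nnnorm_deriv_le (η.differentiable) fun x => ?_
    rw [← NNReal.coe_le_coe, coe_nnnorm, Real.coe_toNNReal _ hC0]
    exact hC' x
  have hKbound : ∀ x : ℝ, |(η : ℝ → ℝ) x - η 0| ≤ C * |x| := by
    intro x
    have := hLip.dist_le_mul x 0
    rw [Real.dist_eq, Real.dist_eq, sub_zero, Real.coe_toNNReal _ hC0] at this
    exact this
  have hmeas : Measurable (hfun σ η) := by
    unfold hfun Gfun
    apply Measurable.div
    · exact ((Real.measurable_exp.comp (by fun_prop)).mul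
        ((η.continuous.measurable).sub measurable_const))
    · fun_prop
  refine ((Gfun_integrable σ hσ).const_mul (C / π)).mono' hmeas.aestronglyMeasurable
    (Eventually.of_forall fun x => ?_)
  rcases eq_or_ne x 0 with hx | hx
  · simp only [hfun, hx, mul_zero, div_zero, norm_zero]
    exact mul_nonneg (div_nonneg hC0 pi_pos.le) (Gfun_nonneg σ 0)
  · unfold hfun
    rw [Real.norm_eq_abs, abs_div, abs_mul, abs_mul, abs_of_pos pi_pos,
      _root_.abs_of_nonneg (Gfun_nonneg σ x)]
    rw [div_le_iff₀ (by positivity)]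
    calc Gfun σ x * |(η : ℝ → ℝ) x - η 0| ≤ Gfun σ x * (C * |x|) :=
          mul_le_mul_of_nonneg_left (hKbound x) (Gfun_nonneg σ x)
      _ = C / π * Gfun σ x * (π * |x|) := by
          field_simp

lemma main_atTop (σ : ℝ) (hσ : 0 < σ) (η : SchwartzMap ℝ ℝ) :
    Tendsto
      (fun t : ℝ =>
        ∫ x : ℝ, Real.sin (t * x) / (π * x) * Real.exp (-(x ^ 2) / (2 * σ ^ 2)) * η x)
      atTop (𝓝 (η 0)) := by
  have hG := Gfun_integrable σ hσ
  have hh := hfun_integrable σ hσ η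
  have hQ : ∀ t : ℝ, Integrable (fun x => Real.sin (t * x) / (π * x) * Gfun σ x) := by
    intro t
    refine (hG.const_mul (|t| / π)).mono' ?_ (Eventually.of_forall fun x => ?_)
    · refine Measurable.aestronglyMeasurable ?_
      unfold Gfun
      exact ((Real.measurable_sin.comp (by fun_prop)).div (by fun_prop)).mul
        (Real.measurable_exp.comp (by fun_prop))
    · rcases eq_or_ne x 0 with hx | hx
      · simp only [hx, mul_zero, Real.sin_zero, zero_div, zero_mul, norm_zero]
        exact mul_nonneg (div_nonneg (abs_nonneg t) pi_pos.le) (Gfun_nonneg σ 0)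
      · rw [Real.norm_eq_abs, abs_mul, abs_div, abs_mul, abs_of_pos pi_pos,
          _root_.abs_of_nonneg (Gfun_nonneg σ x)]
        rw [div_mul_eq_mul_div, div_le_iff₀ (by positivity)]
        calc |Real.sin (t * x)| * Gfun σ x ≤ |t * x| * Gfun σ x :=
              mul_le_mul_of_nonneg_right Real.abs_sin_le_abs (Gfun_nonneg σ x)
          _ = |t| * |x| * Gfun σ x := by rw [abs_mul]
          _ = |t| / π * Gfun σ x * (π * |x|) := by field_simp
  have hS : ∀ t : ℝ, Integrable (fun x => Real.sin (t * x) * hfun σ η x) := by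
    intro t
    refine hh.bdd_mul (c := 1) ?_ (Eventually.of_forall fun x => by
      rw [Real.norm_eq_abs]; exact Real.abs_sin_le_one _)
    exact (Real.continuous_sin.comp (continuous_const.mul continuous_id)).aestronglyMeasurable
  have hsplit : ∀ t : ℝ,
      ∫ x : ℝ, Real.sin (t * x) / (π * x) * Real.exp (-(x ^ 2) / (2 * σ ^ 2)) * η x
        = η 0 * (∫ x : ℝ, Real.sin (t * x) / (π * x) * Gfun σ x)
          + ∫ x : ℝ, Real.sin (t * x) * hfun σ η x := by
    intro t
    rw [← MeasureTheory.integral_const_mul, ← integral_add ((hQ t).const_mul (η 0)) (hS t)]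
    refine integral_congr_ae (Eventually.of_forall fun x => ?_)
    rcases eq_or_ne x 0 with hx | hx
    · simp [hfun, hx]
    · unfold hfun Gfun
      have hπx : π * x ≠ 0 := mul_ne_zero pi_ne_zero hx
      field_simp
      ring
  have hlim := ((gaussian_sinc_tendsto σ hσ).const_mul ((η : ℝ → ℝ) 0)).add
    (sin_riemann_lebesgue hh)
  rw [mul_one, add_zero] at hlim
  have hlim2 : Tendsto (fun t : ℝ => η 0 * (∫ x : ℝ, Real.sin (t * x) / (π * x) * Gfun σ x)
      + ∫ x : ℝ, Real.sin (t * x) * hfun σ η x) atTop (𝓝 (η 0)) := hlim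
  exact hlim2.congr fun t => (hsplit t).symm

/-- For fixed window width `σ > 0`, the (unnormalized) regularized Shannon
kernels form a delta sequence as the grid spacing `Δ` tends to zero:
tested against any Schwartz function `η`, the integral converges to `η 0`. -/
theorem regShannon_delta_sequence (σ : ℝ) (hσ : 0 < σ) (η : SchwartzMap ℝ ℝ) :
    Tendsto
      (fun Δ : ℝ =>
        ∫ x : ℝ,
          (Real.sin (π * x / Δ) / (π * x)) * Real.exp (-(x ^ 2) / (2 * σ ^ 2)) * η x)
      (𝓝[>] (0 : ℝ)) (𝓝 (η 0)) := by
  have hcomp : Tendsto (fun Δ : ℝ => π / Δ) (𝓝[>] (0:ℝ)) atTop := by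
    have := tendsto_inv_nhdsGT_zero (𝕜 := ℝ)
    simpa [div_eq_mul_inv] using this.const_mul_atTop pi_pos
  have hmain := (main_atTop σ hσ η).comp hcomp
  refine hmain.congr fun Δ => ?_
  simp only [Function.comp_apply]
  congr 1
  funext x
  rw [div_mul_eq_mul_div]
  ring
end
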